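/- arXiv:1901.10589 — 3 statements merged into one kernel-verified Lean document; each statement's English description precedes it below -/
import Mathlib

section
/- If 0 < r < 1, μ > 0, t' > 0, and μ > (1/r)·(t' - t₀)·t₀^{1-r} where t₀ = ((1-r)/(2-r))·t', then g_r(t) = μr - t'·t^{1-r} + t^{2-r} > 0 for all t > 0, so g_r has no zeros on (0, ∞). -/
/-- If `μ > (1/r)(t' - t₀) t₀^(1-r)` with `t₀ = ((1-r)/(2-r)) t'`, then
`g_r(t) > 0` for all `t > 0`, so `g_r` has no zeros on `(0, ∞)`. -/
theorem stmt_5 (r μ t' : ℝ) (hr : 0 < r) (hr1 : r < 1) (hμ : 0 < μ) (ht' : 0 < t')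
    (h : μ > (1 / r) * (t' - ((1 - r) / (2 - r)) * t') *
        (((1 - r) / (2 - r)) * t') ^ (1 - r)) :
    ∀ t : ℝ, 0 < t → 0 < μ * r - t' * t ^ (1 - r) + t ^ (2 - r) := by
  intro t ht
  have hs0 : (0:ℝ) < 2 - r := by linarith
  have h1r : (0:ℝ) < 1 - r := by linarith
  set t₀ : ℝ := ((1 - r) / (2 - r)) * t' with ht₀def
  have ht₀pos : 0 < t₀ := by positivity
  -- μ * r > (t' - t₀) * t₀ ^ (1-r)
  have hμr : (t' - t₀) * t₀ ^ (1 - r) < μ * r := by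
    have h2 := mul_lt_mul_of_pos_right h hr
    calc (t' - t₀) * t₀ ^ (1 - r)
        = (1 / r) * (t' - t₀) * t₀ ^ (1 - r) * r := by field_simp
      _ < μ * r := h2
  -- the value of (t' - t₀) * t₀ ^ (1-r) in closed form
  have ht'pow : t' ^ (2 - r) = t' * t' ^ (1 - r) := by
    rw [show (2:ℝ) - r = 1 + (1 - r) by ring, Real.rpow_add ht', Real.rpow_one]
  have hrhs : (t' - t₀) * t₀ ^ (1 - r)
      = t' ^ (2 - r) * ((1 - r) / (2 - r)) ^ (1 - r) / (2 - r) := by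
    have h1 : t' - t₀ = t' / (2 - r) := by
      rw [ht₀def]; field_simp; ring
    rw [h1, ht₀def, Real.mul_rpow (by positivity) ht'.le, ht'pow]
    ring
  -- key inequality : t^(1-r) * (t' - t) ≤ (t' - t₀) * t₀^(1-r)
  have hkey : t ^ (1 - r) * (t' - t) ≤ (t' - t₀) * t₀ ^ (1 - r) := by
    rcases le_or_gt t' t with hle | hlt
    · have hL : t ^ (1 - r) * (t' - t) ≤ 0 :=
        mul_nonpos_of_nonneg_of_nonpos (by positivity) (by linarith)
      have hR : 0 < (t' - t₀) * t₀ ^ (1 - r) := by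
        have : t' - t₀ = t' / (2 - r) := by rw [ht₀def]; field_simp; ring
        rw [this]; positivity
      linarith
    · -- weighted AM-GM
      set w₁ : ℝ := (1 - r) / (2 - r) with hw₁
      set w₂ : ℝ := 1 / (2 - r) with hw₂
      set p₁ : ℝ := (2 - r) / (1 - r) * t with hp₁
      set p₂ : ℝ := (2 - r) * (t' - t) with hp₂
      have hw₁0 : 0 ≤ w₁ := by positivity
      have hw₂0 : 0 ≤ w₂ := by positivity
      have hp₁0 : 0 ≤ p₁ := by positivity
      have hp₂0 : 0 ≤ p₂ := by
        have : 0 ≤ t' - t := by linarith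
        positivity
      have hw : w₁ + w₂ = 1 := by rw [hw₁, hw₂]; field_simp; ring
      have hgm := Real.geom_mean_le_arith_mean2_weighted hw₁0 hw₂0 hp₁0 hp₂0 hw
      have harith : w₁ * p₁ + w₂ * p₂ = t' := by
        rw [hw₁, hw₂, hp₁, hp₂]; field_simp; ring
      rw [harith] at hgm
      have hpow := Real.rpow_le_rpow (by positivity) hgm hs0.le
      rw [Real.mul_rpow (by positivity) (by positivity),
        ← Real.rpow_mul hp₁0, ← Real.rpow_mul hp₂0] at hpow
      have hw₁e : w₁ * (2 - r) = 1 - r := by rw [hw₁]; field_simp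
      have hw₂e : w₂ * (2 - r) = 1 := by rw [hw₂]; field_simp
      rw [hw₁e, hw₂e, Real.rpow_one] at hpow
      -- hpow : p₁ ^ (1-r) * p₂ ≤ t' ^ (2-r)
      have hp₁e : p₁ ^ (1 - r) = ((2 - r) / (1 - r)) ^ (1 - r) * t ^ (1 - r) := by
        rw [hp₁, Real.mul_rpow (by positivity) ht.le]
      rw [hp₁e, hp₂] at hpow
      set c : ℝ := ((2 - r) / (1 - r)) ^ (1 - r) with hc
      have hc0 : 0 < c := by positivity
      have hcinv : ((1 - r) / (2 - r)) ^ (1 - r) = c⁻¹ := by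
        rw [hc, ← Real.inv_rpow (by positivity), inv_div]
      rw [hrhs, hcinv]
      have heq : t' ^ (2 - r) * c⁻¹ / (2 - r) = t' ^ (2 - r) / (c * (2 - r)) := by
        field_simp
      rw [heq, le_div_iff₀ (by positivity)]
      calc t ^ (1 - r) * (t' - t) * (c * (2 - r))
          = c * t ^ (1 - r) * ((2 - r) * (t' - t)) := by ring
        _ ≤ t' ^ (2 - r) := hpow
  -- conclude
  have hsplit : t ^ (2 - r) = t ^ (1 - r) * t := by
    rw [show (2:ℝ) - r = (1 - r) + 1 by ring, Real.rpow_add ht, Real.rpow_one]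
  have : t' * t ^ (1 - r) - t ^ (2 - r) = t ^ (1 - r) * (t' - t) := by
    rw [hsplit]; ring
  nlinarith [hkey, hμr]
end

section
/- If 0 < r < 1, μ > 0, t' > 0, and μ < (1/r)·(t' - t₀)·t₀^{1-r} where t₀ = ((1-r)/(2-r))·t', then g_r(t) = μr - t'·t^{1-r} + t^{2-r} has exactly two zeros on (0, ∞): one in (0, t₀) and one in (t₀, t'). -/
open Real Set

/-- If `μ < (1/r)(t' - t₀) t₀^(1-r)` with `t₀ = ((1-r)/(2-r)) t'`, then
`g_r` has exactly two zeros on `(0, ∞)`: one in `(0, t₀)` and one in `(t₀, t')`. -/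
theorem stmt_6 (r μ t' : ℝ) (hr : 0 < r) (hr1 : r < 1) (hμ : 0 < μ) (ht' : 0 < t')
    (h : μ < (1 / r) * (t' - ((1 - r) / (2 - r)) * t') *
        (((1 - r) / (2 - r)) * t') ^ (1 - r)) :
    ∃ t₁ ∈ Set.Ioo (0 : ℝ) (((1 - r) / (2 - r)) * t'),
      ∃ t₂ ∈ Set.Ioo (((1 - r) / (2 - r)) * t') t',
        μ * r - t' * t₁ ^ (1 - r) + t₁ ^ (2 - r) = 0 ∧
        μ * r - t' * t₂ ^ (1 - r) + t₂ ^ (2 - r) = 0 ∧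
        ∀ t : ℝ, 0 < t → μ * r - t' * t ^ (1 - r) + t ^ (2 - r) = 0 →
          t = t₁ ∨ t = t₂ := by
  have h1r : (0:ℝ) < 1 - r := by linarith
  have h2r : (0:ℝ) < 2 - r := by linarith
  set t₀ : ℝ := ((1 - r) / (2 - r)) * t' with ht₀def
  have ht₀pos : 0 < t₀ := by positivity
  have ht₀eq : (2 - r) * t₀ = (1 - r) * t' := by
    rw [ht₀def]
    field_simp
  have ht₀lt : t₀ < t' := by nlinarith
  set g : ℝ → ℝ := fun t => μ * r - t' * t ^ (1 - r) + t ^ (2 - r) with hg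
  have hcont : Continuous g := by
    refine Continuous.add (Continuous.sub continuous_const ?_) ?_
    · exact continuous_const.mul (continuous_iff_continuousAt.mpr fun x =>
        Real.continuousAt_rpow_const x _ (Or.inr h1r.le))
    · exact continuous_iff_continuousAt.mpr fun x =>
        Real.continuousAt_rpow_const x _ (Or.inr h2r.le)
  have key : ∀ x : ℝ, 0 < x → x ^ (2 - r) = x * x ^ (1 - r) := by
    intro x hx
    rw [show (2:ℝ) - r = 1 + (1 - r) by ring, Real.rpow_add hx, Real.rpow_one]
  have hg0 : g 0 = μ * r := by
    simp [hg, Real.zero_rpow (by linarith : (1:ℝ) - r ≠ 0),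
      Real.zero_rpow (by linarith : (2:ℝ) - r ≠ 0)]
  have hgt' : g t' = μ * r := by
    simp only [hg]; rw [key t' ht']; ring
  have hμr : μ * r < (t' - t₀) * t₀ ^ (1 - r) := by
    have h2 := mul_lt_mul_of_pos_right h hr
    have h3 : 1 / r * (t' - t₀) * t₀ ^ (1 - r) * r = (t' - t₀) * t₀ ^ (1 - r) := by
      field_simp
    linarith [h3 ▸ h2]
  have hgt₀ : g t₀ < 0 := by
    simp only [hg]; rw [key t₀ ht₀pos]; nlinarith
  have hderiv : ∀ x : ℝ, 0 < x →
      HasDerivAt g (x ^ (-r) * ((2 - r) * x - (1 - r) * t')) x := by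
    intro x hx
    have h1 : HasDerivAt (fun t : ℝ => t ^ (1 - r)) ((1 - r) * x ^ (1 - r - 1)) x :=
      Real.hasDerivAt_rpow_const (Or.inl hx.ne')
    have h2 : HasDerivAt (fun t : ℝ => t ^ (2 - r)) ((2 - r) * x ^ (2 - r - 1)) x :=
      Real.hasDerivAt_rpow_const (Or.inl hx.ne')
    have := ((hasDerivAt_const x (μ * r)).sub (h1.const_mul t')).add h2
    convert this using 1
    · rfl
    · rfl
    · rfl
    have e1 : (1:ℝ) - r - 1 = -r := by ring
    have e2 : x ^ ((2:ℝ) - r - 1) = x * x ^ (-r) := by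
      rw [show (2:ℝ) - r - 1 = 1 + -r by ring, Real.rpow_add hx, Real.rpow_one]
    rw [e1, e2]; ring
  have hanti : StrictAntiOn g (Icc 0 t₀) := by
    refine strictAntiOn_of_deriv_neg (convex_Icc _ _) hcont.continuousOn ?_
    intro x hx
    rw [interior_Icc] at hx
    rw [(hderiv x hx.1).deriv]
    apply mul_neg_of_pos_of_neg (Real.rpow_pos_of_pos hx.1 _)
    nlinarith [hx.2]
  have hmono : StrictMonoOn g (Ici t₀) := by
    refine strictMonoOn_of_deriv_pos (convex_Ici _) hcont.continuousOn ?_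
    intro x hx
    rw [interior_Ici] at hx
    rw [(hderiv x (ht₀pos.trans hx)).deriv]
    apply mul_pos (Real.rpow_pos_of_pos (ht₀pos.trans hx) _)
    nlinarith [mem_Ioi.mp hx]
  have hmem1 : (0:ℝ) ∈ Ioo (g t₀) (g 0) := ⟨hgt₀, by rw [hg0]; positivity⟩
  obtain ⟨t₁, ht₁mem, ht₁⟩ := intermediate_value_Ioo' ht₀pos.le hcont.continuousOn hmem1
  have hmem2 : (0:ℝ) ∈ Ioo (g t₀) (g t') := ⟨hgt₀, by rw [hgt']; positivity⟩
  obtain ⟨t₂, ht₂mem, ht₂⟩ := intermediate_value_Ioo ht₀lt.le hcont.continuousOn hmem2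
  refine ⟨t₁, ht₁mem, t₂, ht₂mem, ht₁, ht₂, ?_⟩
  intro t ht htz
  have hgtz : g t = 0 := htz
  rcases le_or_gt t t₀ with hle | hlt
  · left
    exact hanti.injOn ⟨ht.le, hle⟩ ⟨ht₁mem.1.le, ht₁mem.2.le⟩ (by rw [hgtz, ht₁])
  · right
    exact hmono.injOn (le_of_lt hlt) (le_of_lt ht₂mem.1) (by rw [hgtz, ht₂])
end

section
/- If 0 < r < 1, μ > 0, t' > 0, and μ ≥ (1/r)·(t' - t₀)·t₀^{1-r} with t₀ = ((1-r)/(2-r))·t', then E_r(t) = μ·t^r + (1/2)(t - t')² is nondecreasing on [0, ∞), and hence t = 0 is a global minimizer of E_r on [0, ∞). -/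
open Real Set

/-- Key pointwise inequality: `(t' - t) * t ^ (1-r) ≤ (t' - t₀) * t₀ ^ (1-r)` for `t ≥ 0`. -/
lemma key_phi (r t' : ℝ) (hr : 0 < r) (hr1 : r < 1) (ht' : 0 < t') {t : ℝ} (ht : 0 ≤ t) :
    (t' - t) * t ^ (1 - r) ≤
      (t' - ((1 - r) / (2 - r)) * t') * (((1 - r) / (2 - r)) * t') ^ (1 - r) := by
  set s : ℝ := 1 - r with hs
  have hs0 : 0 < s := by simp [hs]; linarith
  have hs1 : s < 1 := by simp [hs]; linarith
  have h2r : 0 < 2 - r := by linarith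
  set t₀ : ℝ := ((1 - r) / (2 - r)) * t' with ht₀def
  have ht₀ : 0 < t₀ := by positivity
  have ht't₀ : t' - t₀ = t' / (2 - r) := by rw [ht₀def]; field_simp; ring
  have ht't₀pos : 0 < t' - t₀ := by rw [ht't₀]; positivity
  set x : ℝ := t / t₀ with hx
  have hx0 : 0 ≤ x := by positivity
  -- t'-t = (t'-t₀) * (1 + s*(1-x))
  have h1 : t' - t = (t' - t₀) * (1 + s * (1 - x)) := by
    rw [ht't₀]
    have : t = x * t₀ := by rw [hx]; field_simp
    rw [this, ht₀def, hs]
    field_simp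
    ring
  -- t^s = t₀^s * x^s
  have h2 : t ^ s = t₀ ^ s * x ^ s := by
    have : t = t₀ * x := by rw [hx]; field_simp
    rw [this, Real.mul_rpow ht₀.le hx0]
  rw [h1, h2]
  have ht₀s : (0:ℝ) < t₀ ^ s := Real.rpow_pos_of_pos ht₀ s
  rw [show (t' - t₀) * (1 + s * (1 - x)) * (t₀ ^ s * x ^ s)
      = ((t' - t₀) * t₀ ^ s) * ((1 + s * (1 - x)) * x ^ s) by ring]
  have hfac : (0:ℝ) < (t' - t₀) * t₀ ^ s := by positivity
  nth_rewrite 2 [show (t' - t₀) * t₀ ^ s = ((t' - t₀) * t₀ ^ s) * 1 by ring]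
  apply mul_le_mul_of_nonneg_left _ hfac.le
  -- show (1 + s*(1-x)) * x^s ≤ 1
  by_cases hc : 1 + s * (1 - x) ≤ 0
  · have : x ^ s ≥ 0 := Real.rpow_nonneg hx0 s
    nlinarith
  push_neg at hc
  have hbern : x ^ s ≤ 1 + s * (x - 1) := by
    have := rpow_one_add_le_one_add_mul_self (s := x - 1) (p := s)
      (by linarith) hs0.le hs1.le
    simpa using this
  have hxs0 : 0 ≤ x ^ s := Real.rpow_nonneg hx0 s
  calc (1 + s * (1 - x)) * x ^ s ≤ (1 + s * (1 - x)) * (1 + s * (x - 1)) :=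
        mul_le_mul_of_nonneg_left hbern hc.le
    _ = 1 - s ^ 2 * (x - 1) ^ 2 := by ring
    _ ≤ 1 := by nlinarith

/-- If `μ ≥ (1/r)(t' - t₀) t₀^(1-r)` with `t₀ = ((1-r)/(2-r)) t'`, then
`E_r` is nondecreasing on `[0, ∞)` and `t = 0` is a global minimizer there. -/
theorem stmt_8 (r μ t' : ℝ) (hr : 0 < r) (hr1 : r < 1) (hμ : 0 < μ) (ht' : 0 < t')
    (h : μ ≥ (1 / r) * (t' - ((1 - r) / (2 - r)) * t') *
        (((1 - r) / (2 - r)) * t') ^ (1 - r)) :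
    MonotoneOn (fun t : ℝ => μ * t ^ r + (1 / 2) * (t - t') ^ 2) (Set.Ici 0) ∧
      ∀ t ∈ Set.Ici (0 : ℝ),
        μ * (0 : ℝ) ^ r + (1 / 2) * ((0 : ℝ) - t') ^ 2 ≤
          μ * t ^ r + (1 / 2) * (t - t') ^ 2 := by
  set f : ℝ → ℝ := fun t => μ * t ^ r + (1 / 2) * (t - t') ^ 2 with hf
  have hmono : MonotoneOn f (Set.Ici 0) := by
    apply monotoneOn_of_deriv_nonneg (convex_Ici 0)
    · -- continuity
      apply ContinuousOn.add
      · exact ContinuousOn.mul continuousOn_const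
          (fun x hx => (Real.continuousAt_rpow_const x r (Or.inr hr.le)).continuousWithinAt)
      · fun_prop
    · intro t ht
      rw [interior_Ici] at ht
      have htpos : (0:ℝ) < t := ht
      apply DifferentiableAt.differentiableWithinAt
      apply DifferentiableAt.add
      · exact (Real.differentiableAt_rpow_const_of_ne r htpos.ne').const_mul μ
      · fun_prop
    · intro t ht
      rw [interior_Ici] at ht
      have htpos : (0:ℝ) < t := ht
      have hd : HasDerivAt f (μ * (r * t ^ (r - 1)) + (1/2) * (2 * (t - t'))) t := by
        apply HasDerivAt.add
        · exact (Real.hasDerivAt_rpow_const (Or.inl htpos.ne')).const_mul μ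
        · have : HasDerivAt (fun t : ℝ => (t - t') ^ 2) (2 * (t - t') ^ (2-1) * 1) t :=
            ((hasDerivAt_id t).sub_const t').pow 2
          simpa using this.const_mul (1/2 : ℝ)
      rw [hd.deriv]
      -- need μ * r * t^(r-1) + (t - t') ≥ 0
      rcases le_or_gt t' t with hc | hc
      · have : 0 ≤ μ * (r * t ^ (r - 1)) := by positivity
        nlinarith
      · -- t < t' : use key inequality
        have hkey := key_phi r t' hr hr1 ht' htpos.le
        have hμr : μ * r ≥ (t' - ((1-r)/(2-r)) * t') * (((1-r)/(2-r)) * t') ^ (1-r) := by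
          rw [ge_iff_le, ← div_le_iff₀ hr] at *
          calc (t' - ((1-r)/(2-r)) * t') * (((1-r)/(2-r)) * t') ^ (1-r) / r
              = (1/r) * (t' - ((1-r)/(2-r)) * t') * (((1-r)/(2-r)) * t') ^ (1-r) := by ring
            _ ≤ μ := h
        have hμr2 : μ * r ≥ (t' - t) * t ^ (1 - r) := le_trans hkey hμr
        -- multiply by t^(r-1) > 0
        have hts : t ^ (1 - r) * t ^ (r - 1) = 1 := by
          rw [← Real.rpow_add htpos]; norm_num
        have htr1 : (0:ℝ) < t ^ (r - 1) := Real.rpow_pos_of_pos htpos _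
        have := mul_le_mul_of_nonneg_right hμr2 htr1.le
        rw [mul_assoc, hts, mul_one] at this
        nlinarith
  refine ⟨hmono, fun t ht => ?_⟩
  exact hmono (by simp : (0:ℝ) ∈ Set.Ici (0:ℝ)) ht ht
end
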